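/- arXiv:2508.12950 — 2 statements merged into one kernel-verified Lean document; each statement's English description precedes it below -/
import Mathlib

section
/- Let d ≥ 1 be a natural number, let N ≥ 1, and let x_0 < x_1 < ⋯ < x_N be real numbers. Define B_i : ℝ → ℝ by B_i(x) = (max (x_i − x) 0)^d for i = 1, …, N. If c_1, …, c_N are real numbers with Σ_{i=1}^N c_i B_i(x) = 0 for every x in the closed interval [x_0, x_N], then c_i = 0 for all i = 1, …, N. (In other words, the family of restrictions of B_1, …, B_N to [x_0, x_N] is linearly independent over ℝ.) -/
/-- Linear independence on `[x 0, x (Fin.last N)]` of the reflected truncated powers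
`B i (t) = (max (x (i+1) - t) 0)^d`, `i = 1, …, N` (paper's Lemma 3.1). -/
theorem stmt_0 (d N : ℕ) (hd : 1 ≤ d) (hN : 1 ≤ N)
    (x : Fin (N + 1) → ℝ) (hx : StrictMono x)
    (c : Fin N → ℝ)
    (h : ∀ t ∈ Set.Icc (x 0) (x (Fin.last N)),
      ∑ i : Fin N, c i * (max (x i.succ - t) 0) ^ d = 0) :
    ∀ i, c i = 0 := by
  have key : ∀ n : ℕ, ∀ i : Fin N, (N - (i : ℕ)) ≤ n → c i = 0 := by
    intro n
    induction n with
    | zero => intro i hi; have := i.isLt; omega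
    | succ n ih =>
      intro i _
      set t : ℝ := (x i.castSucc + x i.succ) / 2 with ht
      have hlt : x i.castSucc < x i.succ := hx Fin.castSucc_lt_succ
      have ht1 : x i.castSucc < t := by rw [ht]; linarith
      have ht2 : t < x i.succ := by rw [ht]; linarith
      have htmem : t ∈ Set.Icc (x 0) (x (Fin.last N)) := by
        constructor
        · have : x 0 ≤ x i.castSucc := hx.monotone (Fin.zero_le _)
          linarith
        · have : x i.succ ≤ x (Fin.last N) := hx.monotone (Fin.le_last _)
          linarith
      have hsum := h t htmem
      rw [Finset.sum_eq_single i] at hsum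
      · have hpos : (0:ℝ) < (x i.succ - t) ^ d := pow_pos (by linarith) d
        have hmax : max (x i.succ - t) 0 = x i.succ - t := max_eq_left (by linarith)
        rw [hmax] at hsum
        exact (mul_eq_zero.mp hsum).resolve_right (ne_of_gt hpos)
      · intro j _ hji
        rcases lt_or_gt_of_ne hji with hj | hj
        · have hle : j.succ ≤ i.castSucc := by
            rw [Fin.le_def]
            simp only [Fin.val_succ, Fin.coe_castSucc]
            exact hj
          have hxle : x j.succ ≤ x i.castSucc := hx.monotone hle
          have : max (x j.succ - t) 0 = 0 := max_eq_right (by linarith)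
          rw [this, zero_pow (by omega), mul_zero]
        · have hc : c j = 0 := ih j (by omega)
          simp [hc]
      · intro hni; exact absurd (Finset.mem_univ i) hni
  intro i
  exact key N i (by omega)
end

section
/- Let d ≥ 1 be a natural number, a ∈ ℝ, m ≥ 1, let N_1, …, N_m : ℝ → ℝ be functions that are linearly independent over ℝ, and let b_1, …, b_m be real numbers. Define F : ℝ × ℝ → ℝ by F(x, y) = Σ_{j=1}^m b_j N_j(x) · (max (y − a) 0)^d. If for every x ∈ ℝ the function y ↦ F(x, y) is d-times continuously differentiable at y = a (ContDiffAt ℝ d (fun y => F (x, y)) a), then b_j = 0 for all j = 1, …, m. -/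
open Set

lemma relu_pow_hasDerivAt (a : ℝ) (d : ℕ) (hd : 2 ≤ d) (y : ℝ) :
    HasDerivAt (fun z : ℝ => (max (z - a) 0) ^ d) (d * (max (y - a) 0) ^ (d - 1)) y := by
  rcases lt_trichotomy y a with hy | hy | hy
  · have h0 : HasDerivAt (fun _ : ℝ => (0:ℝ)) 0 y := hasDerivAt_const y 0
    have heq : (fun z : ℝ => (max (z - a) 0) ^ d) =ᶠ[nhds y] fun _ => (0:ℝ) := by
      filter_upwards [Iio_mem_nhds hy] with z hz
      rw [max_eq_right (by simp at hz ⊢; linarith), zero_pow (by omega)]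
    have := h0.congr_of_eventuallyEq heq
    refine this.congr_deriv ?_
    rw [max_eq_right (by linarith), zero_pow (by omega), mul_zero]
  · subst hy
    have hIci : HasDerivWithinAt (fun z : ℝ => (max (z - y) 0) ^ d)
        (d * (max (y - y) 0) ^ (d - 1)) (Ici y) y := by
      have hg : HasDerivAt (fun z : ℝ => (z - y) ^ d) ((d : ℝ) * (y - y) ^ (d - 1) * 1) y :=
        ((hasDerivAt_id y).sub_const y).pow d
      have := hg.hasDerivWithinAt (s := Ici y)
      refine (this.congr (fun z hz => ?_) ?_).congr_deriv ?_
      · rw [max_eq_left (by simp at hz ⊢; linarith)]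
      · rw [max_eq_left (by simp)]
      · rw [sub_self, max_self, zero_pow (by omega : d - 1 ≠ 0)]
        ring
    have hIic : HasDerivWithinAt (fun z : ℝ => (max (z - y) 0) ^ d)
        (d * (max (y - y) 0) ^ (d - 1)) (Iic y) y := by
      have h0 : HasDerivAt (fun _ : ℝ => (0:ℝ)) 0 y := hasDerivAt_const y 0
      have := h0.hasDerivWithinAt (s := Iic y)
      refine (this.congr (fun z hz => ?_) ?_).congr_deriv ?_
      · rw [max_eq_right (by simp at hz ⊢; linarith), zero_pow (by omega)]
      · rw [sub_self, max_self, zero_pow (by omega)]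
      · rw [sub_self, max_self, zero_pow (by omega), mul_zero]
    have := hIic.union hIci
    rwa [Set.Iic_union_Ici, hasDerivWithinAt_univ] at this
  · have hg : HasDerivAt (fun z : ℝ => (z - a) ^ d) ((d : ℝ) * (y - a) ^ (d - 1) * 1) y :=
      ((hasDerivAt_id y).sub_const a).pow d
    have heq : (fun z : ℝ => (max (z - a) 0) ^ d) =ᶠ[nhds y] fun z => (z - a) ^ d := by
      filter_upwards [Ioi_mem_nhds hy] with z hz
      rw [max_eq_left (by simp at hz ⊢; linarith)]
    have := hg.congr_of_eventuallyEq heq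
    refine this.congr_deriv ?_
    rw [max_eq_left (by linarith)]
    ring

lemma key (a : ℝ) : ∀ d : ℕ, 1 ≤ d → ∀ c : ℝ,
    ContDiffAt ℝ (d : ℕ) (fun y : ℝ => c * (max (y - a) 0) ^ d) a → c = 0 := by
  intro d
  induction d with
  | zero => omega
  | succ d ih =>
    intro _ c h
    rcases Nat.eq_zero_or_pos d with h0 | h1
    · subst h0
      -- base case d = 1
      have hdiff : DifferentiableAt ℝ (fun y : ℝ => c * (max (y - a) 0) ^ 1) a :=
        h.differentiableAt (by norm_num)
      set f' := deriv (fun y : ℝ => c * (max (y - a) 0) ^ 1) a with hf'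
      have hD : HasDerivAt (fun y : ℝ => c * (max (y - a) 0) ^ 1) f' a := hdiff.hasDerivAt
      have hIci : HasDerivWithinAt (fun y : ℝ => c * (max (y - a) 0) ^ 1) c (Ici a) a := by
        have hg : HasDerivAt (fun z : ℝ => c * (z - a)) (c * 1) a :=
          ((hasDerivAt_id a).sub_const a).const_mul c
        have := hg.hasDerivWithinAt (s := Ici a)
        refine (this.congr (fun z hz => ?_) ?_).congr_deriv (by ring)
        · rw [pow_one, max_eq_left (by simp at hz ⊢; linarith)]
        · rw [pow_one, max_eq_left (by simp)]
      have hIic : HasDerivWithinAt (fun y : ℝ => c * (max (y - a) 0) ^ 1) 0 (Iic a) a := by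
        have h0 : HasDerivAt (fun _ : ℝ => (0:ℝ)) 0 a := hasDerivAt_const a 0
        have := h0.hasDerivWithinAt (s := Iic a)
        refine this.congr (fun z hz => ?_) ?_
        · rw [pow_one, max_eq_right (by simp at hz ⊢; linarith), mul_zero]
        · rw [pow_one, sub_self, max_self, mul_zero]
      have hu1 : UniqueDiffWithinAt ℝ (Ici a) a := uniqueDiffOn_Ici a a (by simp)
      have hu2 : UniqueDiffWithinAt ℝ (Iic a) a := uniqueDiffOn_Iic a a (by simp)
      have e1 : f' = c := by
        rw [← hIci.derivWithin hu1, ← (hD.hasDerivWithinAt (s := Ici a)).derivWithin hu1]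
      have e2 : f' = 0 := by
        rw [← hIic.derivWithin hu2, ← (hD.hasDerivWithinAt (s := Iic a)).derivWithin hu2]
      rw [← e1, e2]
    · -- inductive step: d ≥ 1, exponent d+1 ≥ 2
      have hder : ∀ y : ℝ, HasDerivAt (fun z : ℝ => c * (max (z - a) 0) ^ (d + 1))
          (c * ((d + 1) * (max (y - a) 0) ^ d)) y := by
        intro y
        have := (relu_pow_hasDerivAt a (d + 1) (by omega) y).const_mul c
        simpa using this
      have hderiv : deriv (fun z : ℝ => c * (max (z - a) 0) ^ (d + 1))
          = fun y : ℝ => (c * (d + 1)) * (max (y - a) 0) ^ d := by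
        funext y
        rw [(hder y).deriv]; push_cast; ring
      have h2 : ContDiffAt ℝ (d : ℕ) (deriv (fun z : ℝ => c * (max (z - a) 0) ^ (d + 1))) a := by
        have hf := h.fderiv_right (m := (d : ℕ∞)) (by norm_cast)
        have : ContDiffAt ℝ (d : ℕ)
            (fun y : ℝ => fderiv ℝ (fun z : ℝ => c * (max (z - a) 0) ^ (d + 1)) y 1) a := by
          exact (ContinuousLinearMap.apply ℝ ℝ (1:ℝ)).contDiff.contDiffAt.comp a hf
        simpa only [fderiv_apply_one_eq_deriv] using this
      rw [hderiv] at h2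
      have := ih h1 (c * (d + 1)) h2
      have hne : ((d:ℝ) + 1) ≠ 0 := by positivity
      exact (mul_eq_zero.mp this).resolve_right hne

/-- Steps 1–2 of the paper's Theorem 3.1: if
`F (x, y) = ∑ j, b j * N j x * (max (y - a) 0)^d` with the `N j` linearly independent,
and `y ↦ F (x, y)` is `C^d` at `a` for every `x`, then all `b j` vanish. -/
theorem stmt_5 (d : ℕ) (hd : 1 ≤ d) (a : ℝ) (m : ℕ) (hm : 1 ≤ m)
    (N : Fin m → ℝ → ℝ) (hN : LinearIndependent ℝ N)
    (b : Fin m → ℝ) (F : ℝ × ℝ → ℝ)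
    (hF : ∀ x y : ℝ, F (x, y) = ∑ j : Fin m, b j * N j x * (max (y - a) 0) ^ d)
    (h : ∀ x : ℝ, ContDiffAt ℝ (d : ℕ) (fun y => F (x, y)) a) :
    ∀ j, b j = 0 := by
  have hc : ∀ x : ℝ, (∑ j : Fin m, b j * N j x) = 0 := by
    intro x
    apply key a d hd
    have : (fun y : ℝ => F (x, y))
        = fun y : ℝ => (∑ j : Fin m, b j * N j x) * (max (y - a) 0) ^ d := by
      funext y
      rw [hF x y, Finset.sum_mul]
    rw [← this]
    exact h x
  have hsum : (∑ j : Fin m, b j • N j) = 0 := by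
    funext x
    simpa [Finset.sum_apply] using hc x
  have := (Fintype.linearIndependent_iff.mp hN) b hsum
  exact this
end
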